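/- Let E be a real inner product space, X ⊆ E a nonempty convex set, d : E → ℝ a convex Fréchet-differentiable function with Bregman divergence V(y,x) := d(y) − d(x) − ⟨∇d(x), y − x⟩, μ > 0, δ ≥ 0, L > 0, and g : E → E a μ-relatively strongly monotone operator on X with z* ∈ X a solution of the Minty variational inequality. Let (z_k)_{k≥0}, (w_k)_{k≥0} in X and positive reals (L_k)_{k≥1} with L_i ≤ 2L for all i ≥ 1 satisfy, for every k ≥ 0: (i) w_k minimizes y ↦ ⟨(1/L_{k+1})·g(z_k), y⟩ + V(y, z_k) over X; (ii) z_{k+1} minimizes u ↦ ⟨(1/L_{k+1})·g(w_k), u⟩ + V(u, z_k) + (μ/L_{k+1})·V(u, w_k) over X; (iii) ⟨g(z_k) − g(w_k), z_{k+1} − w_k⟩ ≤ L_{k+1}·( V(w_k, z_k) + V(z_{k+1}, w_k) ) + L_{k+1}·δ. Then for every k ≥ 0: V(z*, z_{k+1}) ≤ (1 + μ/(2L))^{−(k+1)}·V(z*, z_0) + δ·(1 + 2L/μ). -/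

import Mathlib

open scoped RealInnerProductSpace
open Finset

private lemma deriv_nonneg_of_min' {h : ℝ → ℝ} {D : ℝ} (hder : HasDerivAt h D 0)
    (hge : ∀ t ∈ Set.Ioc (0:ℝ) 1, h 0 ≤ h t) : 0 ≤ D := by
  have htend : Filter.Tendsto (slope h 0) (nhdsWithin 0 (Set.Ioi 0)) (nhds D) :=
    (hasDerivAt_iff_tendsto_slope.mp hder).mono_left
      (nhdsWithin_mono _ (fun t ht => by exact ne_of_gt ht))
  refine ge_of_tendsto htend ?_
  filter_upwards [Ioc_mem_nhdsGT one_pos] with t ht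
  have h1 := hge t ht
  rw [slope_def_field]
  exact div_nonneg (by linarith) (by linarith [ht.1])

/-- Theorem 4, second estimate: convergence of Algorithm 5 with adaptive step
constants bounded by 2L. -/
theorem algorithm5_convergence_bounded_constants
    {E : Type*} [NormedAddCommGroup E] [InnerProductSpace ℝ E] [CompleteSpace E]
    (X : Set E) (hXne : X.Nonempty) (hXconv : Convex ℝ X)
    (d : E → ℝ) (hdconv : ConvexOn ℝ Set.univ d)
    (Dd : E → E) (hd : ∀ x, HasGradientAt d (Dd x) x)
    (V : E → E → ℝ) (hV : ∀ y x, V y x = d y - d x - ⟪Dd x, y - x⟫)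
    (μ : ℝ) (hμ : 0 < μ) (g : E → E)
    (hmono : ∀ x ∈ X, ∀ y ∈ X, μ * (V y x + V x y) ≤ ⟪g y - g x, y - x⟫)
    (zs : E) (hzs : zs ∈ X) (hMinty : ∀ x ∈ X, ⟪g x, zs - x⟫ ≤ 0)
    (z w : ℕ → E) (hzX : ∀ k, z k ∈ X) (hwX : ∀ k, w k ∈ X)
    (L : ℕ → ℝ) (hL : ∀ i ≥ 1, 0 < L i)
    (hwmin : ∀ k : ℕ, ∀ y ∈ X,
      (1 / L (k + 1)) * ⟪g (z k), w k⟫ + V (w k) (z k) ≤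
        (1 / L (k + 1)) * ⟪g (z k), y⟫ + V y (z k))
    (hzmin : ∀ k : ℕ, ∀ u ∈ X,
      (1 / L (k + 1)) * ⟪g (w k), z (k + 1)⟫ + V (z (k + 1)) (z k) +
          (μ / L (k + 1)) * V (z (k + 1)) (w k) ≤
        (1 / L (k + 1)) * ⟪g (w k), u⟫ + V u (z k) + (μ / L (k + 1)) * V u (w k))
    (δ Lb : ℝ) (hδ : 0 ≤ δ) (hLb : 0 < Lb) (hLle : ∀ i ≥ 1, L i ≤ 2 * Lb)
    (hls : ∀ k : ℕ, ⟪g (z k) - g (w k), z (k + 1) - w k⟫ ≤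
      L (k + 1) * (V (w k) (z k) + V (z (k + 1)) (w k)) + L (k + 1) * δ) :
    ∀ k : ℕ, V zs (z (k + 1)) ≤
      ((1 + μ / (2 * Lb)) ^ (k + 1))⁻¹ * V zs (z 0) + δ * (1 + 2 * Lb / μ) := by
  have hq1 : (1:ℝ) < 1 + μ / (2 * Lb) := by
    have : 0 < μ / (2 * Lb) := div_pos hμ (by linarith)
    linarith
  set q : ℝ := 1 + μ / (2 * Lb) with hqdef
  have hq0 : 0 < q := by linarith
  -- line derivative of d
  have hline : ∀ (x v : E) (t : ℝ),
      HasDerivAt (fun s : ℝ => d (x + s • v)) ⟪Dd (x + t • v), v⟫ t := by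
    intro x v t
    have h1 : HasDerivAt (fun s : ℝ => x + s • v) v t := by
      simpa using ((hasDerivAt_id t).smul_const v).const_add x
    simpa [InnerProductSpace.toDual_apply_apply, Function.comp_def] using
      ((hd (x + t • v)).hasFDerivAt.comp_hasDerivAt t h1)
  -- V is nonnegative
  have hV0 : ∀ x y : E, 0 ≤ V y x := by
    intro x y
    rw [hV]
    have hcomp : (fun t : ℝ => d (x + t • (y - x))) = d ∘ (AffineMap.lineMap x y) := by
      funext t
      simp only [Function.comp_apply, AffineMap.lineMap_apply_module]
      congr 1
      module
    have hconv : ConvexOn ℝ Set.univ (fun t : ℝ => d (x + t • (y - x))) := by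
      rw [hcomp]
      simpa using hdconv.comp_affineMap (AffineMap.lineMap x y)
    have hder : HasDerivAt (fun t : ℝ => d (x + t • (y - x))) ⟪Dd x, y - x⟫ 0 := by
      simpa using hline x (y - x) 0
    have hs := hconv.le_slope_of_hasDerivAt (Set.mem_univ 0) (Set.mem_univ 1) one_pos hder
    rw [slope_def_field] at hs
    have e1 : x + (1:ℝ) • (y - x) = y := by module
    have e0 : x + (0:ℝ) • (y - x) = x := by module
    simp only [e1, e0] at hs
    norm_num at hs
    linarith
  -- three-point identity
  have hthree : ∀ a b u : E, ⟪Dd b, u - b⟫ - ⟪Dd a, u - b⟫ = V u a - V u b - V b a := by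
    intro a b u
    simp only [hV, inner_sub_right]
    ring
  -- derivative of V along a line
  have hVd : ∀ p v x : E,
      HasDerivAt (fun t : ℝ => V (p + t • v) x) (⟪Dd p, v⟫ - ⟪Dd x, v⟫) 0 := by
    intro p v x
    have heq : (fun t : ℝ => V (p + t • v) x)
        = fun t : ℝ => d (p + t • v) - (d x + (⟪Dd x, p - x⟫ + t * ⟪Dd x, v⟫)) := by
      funext t
      rw [hV]
      have e : ⟪Dd x, p + t • v - x⟫ = ⟪Dd x, p - x⟫ + t * ⟪Dd x, v⟫ := by
        rw [show p + t • v - x = (p - x) + t • v by abel, inner_add_right,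
          real_inner_smul_right]
      rw [e]; ring
    rw [heq]
    have A : HasDerivAt (fun t : ℝ => d (p + t • v)) ⟪Dd p, v⟫ 0 := by
      simpa using hline p v 0
    have B : HasDerivAt (fun t : ℝ => d x + (⟪Dd x, p - x⟫ + t * ⟪Dd x, v⟫)) ⟪Dd x, v⟫ 0 := by
      simpa using
        (((hasDerivAt_id (0:ℝ)).mul_const ⟪Dd x, v⟫).const_add ⟪Dd x, p - x⟫).const_add (d x)
    exact A.sub B
  -- derivative of a linear term along a line
  have hid : ∀ (r : ℝ) (c p v : E), HasDerivAt (fun t : ℝ => r * ⟪c, p + t • v⟫) (r * ⟪c, v⟫) 0 := by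
    intro r c p v
    have heq : (fun t : ℝ => r * ⟪c, p + t • v⟫) = fun t : ℝ => r * ⟪c, p⟫ + t * (r * ⟪c, v⟫) := by
      funext t; rw [inner_add_right, real_inner_smul_right]; ring
    rw [heq]
    simpa using ((hasDerivAt_id (0:ℝ)).mul_const (r * ⟪c, v⟫)).const_add (r * ⟪c, p⟫)
  -- first-order optimality of Bregman proximal steps
  have hopt : ∀ (r s : ℝ) (c x y m : E), m ∈ X →
      (∀ u ∈ X, r * ⟪c, m⟫ + V m x + s * V m y ≤ r * ⟪c, u⟫ + V u x + s * V u y) →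
      ∀ u ∈ X, 0 ≤ r * ⟪c, u - m⟫ + (V u x - V u m - V m x) + s * (V u y - V u m - V m y) := by
    intro r s c x y m hm hminim u hu
    set v := u - m with hvdef
    have hder : HasDerivAt
        (fun t : ℝ => r * ⟪c, m + t • v⟫ + V (m + t • v) x + s * V (m + t • v) y)
        (r * ⟪c, v⟫ + (⟪Dd m, v⟫ - ⟪Dd x, v⟫) + s * (⟪Dd m, v⟫ - ⟪Dd y, v⟫)) 0 :=
      ((hid r c m v).add (hVd m v x)).add ((hVd m v y).const_mul s)
    have hge : ∀ t ∈ Set.Ioc (0:ℝ) 1,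
        (fun t : ℝ => r * ⟪c, m + t • v⟫ + V (m + t • v) x + s * V (m + t • v) y) 0 ≤
        (fun t : ℝ => r * ⟪c, m + t • v⟫ + V (m + t • v) x + s * V (m + t • v) y) t := by
      intro t ht
      have hmem : m + t • v ∈ X := by
        have h2 := hXconv hm hu (by linarith [ht.2] : (0:ℝ) ≤ 1 - t) ht.1.le (by ring)
        have e : (1 - t) • m + t • u = m + t • v := by rw [hvdef]; module
        rwa [e] at h2
      have h3 := hminim (m + t • v) hmem
      simpa using h3
    have hD := deriv_nonneg_of_min' hder hge
    have e1 := hthree x m u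
    have e2 := hthree y m u
    rw [show u - m = v from rfl] at e1 e2
    rw [← e1, ← e2]
    exact hD
  -- strong Minty property
  have hSM : ∀ w' ∈ X, μ * V zs w' ≤ ⟪g w', w' - zs⟫ := by
    intro w' hw'
    set v := w' - zs with hv
    have hdiff : Differentiable ℝ (fun t : ℝ => d (zs + t • v)) :=
      fun t => (hline zs v t).differentiableAt
    have hcont : Continuous (fun t : ℝ => d (zs + t • v)) := hdiff.continuous
    obtain ⟨c, hc, hc'⟩ := exists_hasDerivAt_eq_slope (fun t : ℝ => d (zs + t • v))
      (fun t => ⟪Dd (zs + t • v), v⟫) (zero_lt_one) hcont.continuousOn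
      (fun t _ => hline zs v t)
    set xc := zs + c • v with hxc
    have e1 : zs + (1:ℝ) • v = w' := by rw [hv]; module
    have e0 : zs + (0:ℝ) • v = zs := by module
    have hc'' : ⟪Dd xc, v⟫ = d w' - d zs := by
      have e1' : zs + v = w' := by rw [hv]; abel
      simpa [e1, e0, e1'] using hc'
    have h01 : (0:ℝ) ≤ 1 - c := by linarith [hc.2]
    have h1c : (0:ℝ) < 1 - c := by linarith [hc.2]
    have hmemc : xc ∈ X := by
      have h2 := hXconv hzs hw' h01 hc.1.le (by ring)
      have e : (1 - c) • zs + c • w' = xc := by rw [hxc, hv]; module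
      rwa [e] at h2
    have e_wx : w' - xc = (1 - c) • v := by rw [hxc, hv]; module
    have hVsum : V w' xc + V xc w' = ⟪Dd w' - Dd xc, w' - xc⟫ := by
      simp only [hV, inner_sub_left, inner_sub_right]
      ring
    have hVzs : V zs w' = d zs - d w' + ⟪Dd w', v⟫ := by
      rw [hV, hv, show zs - w' = -(w' - zs) by abel, inner_neg_right]
      ring
    have eq1 : V w' xc + V xc w' = (1 - c) * V zs w' := by
      rw [hVsum, e_wx, real_inner_smul_right, inner_sub_left, hc'', hVzs]
      ring
    have eq2 : ⟪g w' - g xc, w' - xc⟫ = (1 - c) * (⟪g w', v⟫ - ⟪g xc, v⟫) := by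
      rw [e_wx, real_inner_smul_right, inner_sub_left]
    have hgx : 0 ≤ ⟪g xc, v⟫ := by
      have hm := hMinty xc hmemc
      have e : zs - xc = -(c • v) := by rw [hxc]; module
      rw [e, inner_neg_right, real_inner_smul_right] at hm
      nlinarith [hc.1]
    have hmm := hmono xc hmemc w' hw'
    have h2 : (1 - c) * (μ * V zs w') ≤ (1 - c) * ⟪g w', v⟫ := by
      nlinarith [mul_nonneg h01 hgx]
    have := le_of_mul_le_mul_left h2 h1c
    exact this
  -- the one-step recurrence
  have hrec : ∀ k : ℕ, q * V zs (z (k + 1)) ≤ V zs (z k) + δ := by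
    intro k
    have ha : 0 < L (k + 1) := hL (k + 1) (Nat.le_add_left 1 k)
    have haLb : L (k + 1) ≤ 2 * Lb := hLle (k + 1) (Nat.le_add_left 1 k)
    set a := L (k + 1) with hadef
    have hI : 0 ≤ (1 / a) * ⟪g (z k), z (k + 1) - w k⟫ +
        (V (z (k + 1)) (z k) - V (z (k + 1)) (w k) - V (w k) (z k)) := by
      have h := hopt (1 / a) 0 (g (z k)) (z k) (z k) (w k) (hwX k)
        (fun u hu => by simpa using hwmin k u hu) (z (k + 1)) (hzX (k + 1))
      simpa using h
    have hII : 0 ≤ (1 / a) * ⟪g (w k), zs - z (k + 1)⟫ +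
        (V zs (z k) - V zs (z (k + 1)) - V (z (k + 1)) (z k)) +
        (μ / a) * (V zs (w k) - V zs (z (k + 1)) - V (z (k + 1)) (w k)) :=
      hopt (1 / a) (μ / a) (g (w k)) (z k) (w k) (z (k + 1)) (hzX (k + 1))
        (fun u hu => hzmin k u hu) zs hzs
    have hIII := hls k
    have hIII' : (1 / a) * ⟪g (z k) - g (w k), z (k + 1) - w k⟫ ≤
        (V (w k) (z k) + V (z (k + 1)) (w k)) + δ := by
      have h2 := mul_le_mul_of_nonneg_left hIII (one_div_nonneg.mpr ha.le)
      have e : (1 / a) * (a * (V (w k) (z k) + V (z (k + 1)) (w k)) + a * δ) =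
          (V (w k) (z k) + V (z (k + 1)) (w k)) + δ := by field_simp
      rw [e] at h2
      exact h2
    have hSMk := hSM (w k) (hwX k)
    have hSMk' : (μ / a) * V zs (w k) ≤ (1 / a) * ⟪g (w k), w k - zs⟫ := by
      have h2 := mul_le_mul_of_nonneg_left hSMk (one_div_nonneg.mpr ha.le)
      have e : (1 / a) * (μ * V zs (w k)) = (μ / a) * V zs (w k) := by ring
      rw [e] at h2
      exact h2
    have hsplit : ⟪g (w k), w k - zs⟫ = -⟪g (w k), zs - z (k + 1)⟫ +
        ⟪g (z k) - g (w k), z (k + 1) - w k⟫ - ⟪g (z k), z (k + 1) - w k⟫ := by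
      simp only [inner_sub_left, inner_sub_right]
      ring
    have hsplit' : (1 / a) * ⟪g (w k), w k - zs⟫ =
        -((1 / a) * ⟪g (w k), zs - z (k + 1)⟫) +
        (1 / a) * ⟪g (z k) - g (w k), z (k + 1) - w k⟫ -
        (1 / a) * ⟪g (z k), z (k + 1) - w k⟫ := by
      rw [hsplit]; ring
    have hEk : 0 ≤ (μ / a) * V (z (k + 1)) (w k) :=
      mul_nonneg (div_nonneg hμ.le ha.le) (hV0 _ _)
    have hstep : V zs (z (k + 1)) + (μ / a) * V zs (z (k + 1)) ≤ V zs (z k) + δ := by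
      have ea : (μ / a) * (V zs (w k) - V zs (z (k + 1)) - V (z (k + 1)) (w k)) =
          (μ / a) * V zs (w k) - (μ / a) * V zs (z (k + 1)) -
          (μ / a) * V (z (k + 1)) (w k) := by ring
      rw [ea] at hII
      linarith [hSMk', hsplit', hII, hIII', hI, hEk]
    have hB0 : 0 ≤ V zs (z (k + 1)) := hV0 _ _
    have hdivle : μ / (2 * Lb) ≤ μ / a := div_le_div_of_nonneg_left hμ.le ha haLb
    have hmul := mul_le_mul_of_nonneg_right hdivle hB0
    calc q * V zs (z (k + 1)) =
        V zs (z (k + 1)) + (μ / (2 * Lb)) * V zs (z (k + 1)) := by rw [hqdef]; ring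
      _ ≤ V zs (z (k + 1)) + (μ / a) * V zs (z (k + 1)) := by linarith [hmul]
      _ ≤ V zs (z k) + δ := hstep
  -- induction
  set cc : ℝ := 2 * Lb / μ with hccdef
  have hc1 : cc * (q - 1) = 1 := by
    rw [hccdef, hqdef]
    field_simp
    ring
  have hccpos : 0 ≤ cc := by positivity
  have hmain : ∀ k : ℕ, V zs (z k) - δ * cc ≤ (q ^ k)⁻¹ * (V zs (z 0) - δ * cc) := by
    intro k
    induction k with
    | zero => simp
    | succ n ih =>
      have hstep2 : V zs (z (n + 1)) ≤ (V zs (z n) + δ) / q :=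
        (le_div_iff₀ hq0).mpr (by rw [mul_comm]; exact hrec n)
      calc V zs (z (n + 1)) - δ * cc ≤ (V zs (z n) + δ) / q - δ * cc := by linarith
        _ = (V zs (z n) - δ * cc) / q := by
            rw [eq_div_iff hq0.ne', sub_mul, div_mul_cancel₀ _ hq0.ne']
            linear_combination (-δ) * hc1
        _ ≤ ((q ^ n)⁻¹ * (V zs (z 0) - δ * cc)) / q := by
            exact (div_le_div_iff_of_pos_right hq0).mpr ih
        _ = (q ^ (n + 1))⁻¹ * (V zs (z 0) - δ * cc) := by
            rw [pow_succ, mul_inv, div_eq_mul_inv]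
            ring
  intro k
  have h1 := hmain (k + 1)
  have hinv : 0 < (q ^ (k + 1))⁻¹ := inv_pos.mpr (pow_pos hq0 _)
  have hpr : 0 ≤ (q ^ (k + 1))⁻¹ * (δ * cc) := mul_nonneg hinv.le (mul_nonneg hδ hccpos)
  have e2 : (q ^ (k + 1))⁻¹ * (V zs (z 0) - δ * cc) =
      (q ^ (k + 1))⁻¹ * V zs (z 0) - (q ^ (k + 1))⁻¹ * (δ * cc) := by ring
  have e3 : δ * (1 + 2 * Lb / μ) = δ + δ * cc := by rw [hccdef]; ring
  rw [e2] at h1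
  linarith [h1, hpr, e3.le, e3.ge]
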